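/- If z^{(m)}(τ) = c·∑_{k=1}^K λ_k·max(t_k − τ, 0)^m on [t_1, t_K] for constants c, λ_k, then z is a spline of order 2m: on each interval [t_i, t_{i+1}] it coincides with a polynomial of degree at most 2m, and z is (2m−1)-times continuously differentiable at the interior knots for m ≥ 1. -/

import Mathlib

open Set Finset

lemma hd_maxpow (n : ℕ) (hn : 1 ≤ n) (x : ℝ) :
    HasDerivAt (fun y : ℝ => max y 0 ^ (n + 1)) ((n + 1) * max x 0 ^ n) x := by
  rcases lt_trichotomy x 0 with hx | rfl | hx
  · have hev : (fun y : ℝ => max y 0 ^ (n + 1)) =ᶠ[nhds x] fun _ => (0 : ℝ) := by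
      filter_upwards [eventually_lt_nhds hx] with y hy
      simp [max_eq_right hy.le, zero_pow (by omega : n + 1 ≠ 0)]
    have : max x 0 = 0 := max_eq_right hx.le
    simpa [this, zero_pow (by omega : n ≠ 0)] using (hasDerivAt_const x (0:ℝ)).congr_of_eventuallyEq hev
  · have h1 : HasDerivWithinAt (fun y : ℝ => max y 0 ^ (n + 1)) 0 (Iic 0) 0 := by
      refine (hasDerivWithinAt_const 0 _ (0:ℝ)).congr ?_ ?_
      · intro y hy
        simp [max_eq_right (mem_Iic.mp hy), zero_pow (by omega : n + 1 ≠ 0)]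
      · simp [zero_pow (by omega : n + 1 ≠ 0)]
    have h2 : HasDerivWithinAt (fun y : ℝ => max y 0 ^ (n + 1)) 0 (Ici 0) 0 := by
      have := (hasDerivAt_pow (n + 1) (0:ℝ)).hasDerivWithinAt (s := Ici 0)
      simp only [Nat.add_sub_cancel, zero_pow (by omega : n ≠ 0), mul_zero] at this
      refine this.congr ?_ ?_
      · intro y hy; simp [max_eq_left (mem_Ici.mp hy)]
      · simp
    have := h1.union h2
    rw [Iic_union_Ici, hasDerivWithinAt_univ] at this
    simpa [zero_pow (by omega : n ≠ 0)] using this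
  · have hev : (fun y : ℝ => max y 0 ^ (n + 1)) =ᶠ[nhds x] fun y => y ^ (n + 1) := by
      filter_upwards [eventually_gt_nhds hx] with y hy
      simp [max_eq_left hy.le]
    have := (hasDerivAt_pow (n + 1) x).congr_of_eventuallyEq hev
    simpa [max_eq_left hx.le, Nat.add_sub_cancel] using this

lemma cd_maxpow : ∀ n : ℕ, ContDiff ℝ n (fun x : ℝ => max x 0 ^ (n + 1)) := by
  intro n
  induction n with
  | zero =>
    rw [show ((0:ℕ) : WithTop ℕ∞) = 0 by rfl, contDiff_zero]
    exact (continuous_id.max continuous_const).pow 1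
  | succ n ih =>
    have hdiff : Differentiable ℝ (fun x : ℝ => max x 0 ^ (n + 1 + 1)) :=
      fun x => (hd_maxpow (n + 1) (by omega) x).differentiableAt
    have hderiv : deriv (fun x : ℝ => max x 0 ^ (n + 1 + 1)) =
        fun x => (n + 1 + 1 : ℝ) * max x 0 ^ (n + 1) := by
      funext x
      simpa using (hd_maxpow (n + 1) (by omega) x).deriv
    rw [show ((n + 1 : ℕ) : WithTop ℕ∞) = (n : WithTop ℕ∞) + 1 by push_cast; ring]
    rw [contDiff_succ_iff_deriv]
    refine ⟨hdiff, by simp, ?_⟩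
    rw [hderiv]
    exact contDiff_const.mul ih

lemma hd_comp (a : ℝ) (e : ℕ) (he : 2 ≤ e) (x : ℝ) :
    HasDerivAt (fun τ : ℝ => max (a - τ) 0 ^ e) (-(e * max (a - x) 0 ^ (e - 1))) x := by
  obtain ⟨n, rfl⟩ : ∃ n, e = n + 1 := ⟨e - 1, by omega⟩
  have h1 : HasDerivAt (fun τ : ℝ => a - τ) (-1) x := (hasDerivAt_id x).const_sub a
  have h2 := (hd_maxpow n (by omega) (a - x)).comp x h1
  have heq : -((((n + 1 : ℕ)) : ℝ) * max (a - x) 0 ^ (n + 1 - 1)) =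
      ((n : ℝ) + 1) * max (a - x) 0 ^ n * -1 := by
    push_cast [Nat.add_sub_cancel]; ring
  rw [heq]
  simpa [Function.comp_def] using h2

lemma itderiv_sum (K : ℕ) (t lam : Fin K → ℝ) (e : ℕ) :
    ∀ j : ℕ, j + 1 ≤ e →
    iteratedDeriv j (fun τ : ℝ => ∑ k, lam k * max (t k - τ) 0 ^ e)
      = fun τ : ℝ => (-1 : ℝ) ^ j * (∏ i ∈ Finset.range j, ((e : ℝ) - i)) *
          ∑ k, lam k * max (t k - τ) 0 ^ (e - j) := by
  intro j
  induction j with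
  | zero => intro _; simp
  | succ j ih =>
    intro hj
    rw [iteratedDeriv_succ, ih (by omega)]
    funext x
    have hd : HasDerivAt (fun τ : ℝ => (-1 : ℝ) ^ j * (∏ i ∈ Finset.range j, ((e : ℝ) - i)) *
          ∑ k, lam k * max (t k - τ) 0 ^ (e - j))
        ((-1 : ℝ) ^ j * (∏ i ∈ Finset.range j, ((e : ℝ) - i)) *
          ∑ k, lam k * (-((e - j : ℕ) * max (t k - x) 0 ^ (e - j - 1)))) x := by
      refine HasDerivAt.const_mul _ (HasDerivAt.fun_sum fun k _ => ?_)
      exact (hd_comp (t k) (e - j) (by omega) x).const_mul (lam k)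
    rw [hd.deriv]
    have h1 : ((e - j : ℕ) : ℝ) = (e : ℝ) - j := by
      have : j ≤ e := by omega
      push_cast [this]; ring
    have h2 : e - j - 1 = e - (j + 1) := by omega
    rw [Finset.prod_range_succ]
    rw [show (∑ k, lam k * (-((e - j : ℕ) * max (t k - x) 0 ^ (e - j - 1))))
        = -(((e - j : ℕ)) * ∑ k, lam k * max (t k - x) 0 ^ (e - (j + 1))) by
      rw [Finset.mul_sum, ← Finset.sum_neg_distrib]
      exact Finset.sum_congr rfl fun k _ => by rw [h2]; ring]
    rw [h1, pow_succ]
    ring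

lemma cd_sum (K : ℕ) (t lam : Fin K → ℝ) (e : ℕ) (he : 1 ≤ e) :
    ContDiff ℝ (e - 1 : ℕ) (fun τ : ℝ => ∑ k, lam k * max (t k - τ) 0 ^ e) := by
  have hbase := cd_maxpow (e - 1)
  rw [show e - 1 + 1 = e by omega] at hbase
  refine ContDiff.sum fun k _ => contDiff_const.mul ?_
  exact hbase.comp (contDiff_const.sub contDiff_id)


lemma itW_eq {n : ℕ} {f : ℝ → ℝ} (hf : ContDiff ℝ n f) {s : Set ℝ}
    (hs : UniqueDiffOn ℝ s) {x : ℝ} (hx : x ∈ s) :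
    iteratedDerivWithin n f s x = iteratedDeriv n f x := by
  have hf' : ContDiff ℝ (n : ℕ∞) f := by exact_mod_cast hf
  have h : HasFTaylorSeriesUpTo (n : ℕ∞) f (ftaylorSeries ℝ f) :=
    contDiff_iff_ftaylorSeries.mp hf'
  have h2 := (h.hasFTaylorSeriesUpToOn s).eq_iteratedFDerivWithin_of_uniqueDiffOn
    (m := n) le_rfl hs hx
  rw [iteratedDerivWithin_eq_iteratedFDerivWithin, iteratedDeriv_eq_iteratedFDeriv, ← h2]
  rfl

open scoped Nat in
theorem stmt_10 (K m : ℕ) (hm : 1 ≤ m) (hK : 0 < K)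
    (t : Fin K → ℝ) (ht : StrictMono t) (c : ℝ) (lam : Fin K → ℝ)
    (z : ℝ → ℝ) (hz : ContDiff ℝ m z)
    (hderiv : ∀ τ ∈ Set.Icc (t ⟨0, hK⟩) (t ⟨K - 1, by omega⟩),
      iteratedDeriv m z τ = c * ∑ k, lam k * max (t k - τ) 0 ^ m) :
    (∀ i : Fin (K - 1), ∃ p : Polynomial ℝ, p.natDegree ≤ 2 * m ∧
        ∀ τ ∈ Set.Icc (t ⟨i.1, by omega⟩) (t ⟨i.1 + 1, by omega⟩),
          z τ = p.eval τ) ∧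
      ContDiffOn ℝ (2 * m - 1)
        z (Set.Icc (t ⟨0, hK⟩) (t ⟨K - 1, by omega⟩)) := by
  have hb' : K - 1 < K := by omega
  set a : ℝ := t ⟨0, hK⟩ with ha
  set b : ℝ := t ⟨K - 1, hb'⟩ with hbdef
  have hab : a ≤ b := ht.monotone (by simp [Fin.le_def])
  set W : ℝ → ℝ := fun τ => ∑ k, lam k * max (t k - τ) 0 ^ (2 * m) with hW
  have hWit := itderiv_sum K t lam (2 * m) m (by omega)
  rw [show 2 * m - m = m by omega] at hWit
  set D : ℝ := (-1 : ℝ) ^ m * ∏ i ∈ Finset.range m, (((2 * m : ℕ) : ℝ) - (i : ℝ)) with hDdef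
  have hD : D ≠ 0 := by
    apply mul_ne_zero (pow_ne_zero _ (by norm_num))
    apply ne_of_gt
    apply Finset.prod_pos
    intro i hi
    have h1 : i < m := Finset.mem_range.mp hi
    have h2 : (i : ℝ) < ((2 * m : ℕ) : ℝ) := by exact_mod_cast (by omega : i < 2 * m)
    linarith
  have hWsm : ContDiff ℝ ((2 * m - 1 : ℕ)) W := cd_sum K t lam (2 * m) (by omega)
  have hWm : ContDiff ℝ (m : ℕ) W :=
    hWsm.of_le (by exact_mod_cast (by omega : m ≤ 2 * m - 1))
  set u : ℝ → ℝ := fun τ => z τ - c / D * W τ with hu_def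
  have hueq : u = z - fun τ => c / D * W τ := rfl
  have hu : ContDiff ℝ (m : ℕ) u := hz.sub (contDiff_const.mul hWm)
  have hu0 : ∀ τ ∈ Set.Icc a b, iteratedDeriv m u τ = 0 := by
    intro τ hτ
    have hsub := iteratedDerivWithin_sub (Set.mem_univ τ) uniqueDiffOn_univ
      (f := z) (g := fun τ => c / D * W τ) hz.contDiffWithinAt
      ((contDiff_const.mul hWm).contDiffWithinAt)
    have hcm := iteratedDerivWithin_const_mul (Set.mem_univ τ) uniqueDiffOn_univ
      (c / D) hWm.contDiffWithinAt
    simp only [iteratedDerivWithin_univ] at hsub hcm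
    rw [hueq, hsub, hcm, hderiv τ hτ]
    have hWτ : iteratedDeriv m W τ
        = D * ∑ k, lam k * max (t k - τ) 0 ^ m := by
      rw [hW, hWit]
    rw [hWτ]
    field_simp
    ring
  have key : ∀ x ∈ Set.Icc a b, u x =
      ∑ i ∈ Finset.range m, ((i ! : ℝ)⁻¹ * (x - a) ^ i) • iteratedDeriv i u a := by
    intro x hx
    rcases eq_or_lt_of_le hx.1 with heq | hlt
    · rw [← heq, Finset.sum_eq_single 0]
      · simp
      · intro i _ hne
        simp [sub_self, zero_pow hne]
      · intro h
        exact absurd (Finset.mem_range.mpr (by omega)) h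
    · have hud : UniqueDiffOn ℝ (Set.Icc a x) := uniqueDiffOn_Icc hlt
      have hf : ContDiffOn ℝ ((m - 1 : ℕ)) u (Set.Icc a x) :=
        (hu.of_le (by exact_mod_cast (by omega : m - 1 ≤ m))).contDiffOn
      have hf' : DifferentiableOn ℝ (iteratedDerivWithin (m - 1) u (Set.Icc a x))
          (Set.Ioo a x) := by
        have hdiff : Differentiable ℝ (iteratedDeriv (m - 1) u) :=
          hu.differentiable_iteratedDeriv (m - 1) (by exact_mod_cast (by omega : m - 1 < m))
        refine hdiff.differentiableOn.congr fun y hy => ?_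
        exact itW_eq (hu.of_le (by exact_mod_cast (by omega : m - 1 ≤ m))) hud
          (Set.Ioo_subset_Icc_self hy)
      obtain ⟨x', hx', htay⟩ := by
        have := taylor_mean_remainder_lagrange hlt.ne (by rwa [Set.uIcc_of_le hlt.le])
          (by rwa [Set.uIcc_of_le hlt.le, Set.uIoo_of_le hlt.le])
        rw [Set.uIcc_of_le hlt.le, Set.uIoo_of_le hlt.le] at this
        exact this
      rw [show m - 1 + 1 = m by omega] at htay
      have hzero : iteratedDerivWithin m u (Set.Icc a x) x' = 0 := by
        rw [itW_eq hu hud (Set.Ioo_subset_Icc_self hx')]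
        exact hu0 x' ⟨hx'.1.le, hx'.2.le.trans hx.2⟩
      rw [hzero, zero_mul, zero_div, sub_eq_zero] at htay
      rw [htay, taylor_within_apply, show m - 1 + 1 = m by omega]
      refine Finset.sum_congr rfl fun i hi => ?_
      rw [itW_eq (hu.of_le (by exact_mod_cast (le_of_lt (Finset.mem_range.mp hi)) : (i : WithTop ℕ∞) ≤ m))
        hud (Set.left_mem_Icc.mpr hlt.le)]
  have hzg : ∀ x ∈ Set.Icc a b, z x =
      (∑ i ∈ Finset.range m, ((i ! : ℝ)⁻¹ * (x - a) ^ i) * iteratedDeriv i u a)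
        + c / D * W x := by
    intro x hx
    have h1 : z x = u x + c / D * W x := by rw [hu_def]; ring
    rw [h1, key x hx]
    simp [smul_eq_mul]
  have hgsm : ContDiff ℝ ((2 * m - 1 : ℕ)) (fun x : ℝ =>
      (∑ i ∈ Finset.range m, ((i ! : ℝ)⁻¹ * (x - a) ^ i) * iteratedDeriv i u a)
        + c / D * W x) := by
    refine ContDiff.add ?_ (contDiff_const.mul hWsm)
    refine ContDiff.sum fun i _ => ?_
    exact (contDiff_const.mul ((contDiff_id.sub contDiff_const).pow i)).mul contDiff_const
  have part2 : ContDiffOn ℝ ((2 * m - 1 : ℕ)) z (Set.Icc a b) :=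
    hgsm.contDiffOn.congr hzg
  constructor
  · intro i
    have hKi : (i : ℕ) < K - 1 := i.isLt
    set S : Finset (Fin K) := Finset.univ.filter (fun k => (i : ℕ) + 1 ≤ (k : ℕ)) with hS
    refine ⟨(∑ j ∈ Finset.range m, Polynomial.C ((j ! : ℝ)⁻¹)
        * (Polynomial.X - Polynomial.C a) ^ j * Polynomial.C (iteratedDeriv j u a))
      + Polynomial.C (c / D) * ∑ k ∈ S, Polynomial.C (lam k)
        * (Polynomial.C (t k) - Polynomial.X) ^ (2 * m), ?_, ?_⟩
    · refine le_trans (Polynomial.natDegree_add_le _ _) (max_le ?_ ?_)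
      · refine Polynomial.natDegree_sum_le_of_forall_le _ _ fun j hj => ?_
        refine Polynomial.natDegree_mul_le.trans ?_
        simp only [Polynomial.natDegree_C, add_zero]
        refine Polynomial.natDegree_mul_le.trans ?_
        simp only [Polynomial.natDegree_C, zero_add]
        refine Polynomial.natDegree_pow_le.trans ?_
        rw [Polynomial.natDegree_X_sub_C]
        have : j < m := Finset.mem_range.mp hj
        omega
      · refine Polynomial.natDegree_mul_le.trans ?_
        simp only [Polynomial.natDegree_C, zero_add]
        refine Polynomial.natDegree_sum_le_of_forall_le _ _ fun k _ => ?_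
        refine Polynomial.natDegree_mul_le.trans ?_
        simp only [Polynomial.natDegree_C, zero_add]
        refine Polynomial.natDegree_pow_le.trans ?_
        have h1 : (Polynomial.C (t k) - Polynomial.X).natDegree ≤ 1 := by
          refine (Polynomial.natDegree_sub_le _ _).trans ?_
          simp [Polynomial.natDegree_C, Polynomial.natDegree_X]
        calc 2 * m * (Polynomial.C (t k) - Polynomial.X).natDegree
            ≤ 2 * m * 1 := by exact Nat.mul_le_mul_left _ h1
          _ = 2 * m := by ring
    · intro τ hτ
      have hτ1 : a ≤ τ := le_trans (ht.monotone (by simp [Fin.le_def])) hτ.1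
      have hτ2 : τ ≤ b := le_trans hτ.2 (ht.monotone (by simp [Fin.le_def]))
      rw [hzg τ ⟨hτ1, hτ2⟩]
      have hWτ : W τ = ∑ k ∈ S, lam k * (t k - τ) ^ (2 * m) := by
        have hWrfl : W τ = ∑ k, lam k * max (t k - τ) 0 ^ (2 * m) := rfl
        rw [hWrfl]
        rw [← Finset.sum_filter_add_sum_filter_not (Finset.univ : Finset (Fin K))
          (fun k => (i : ℕ) + 1 ≤ (k : ℕ))]
        have h2 : ∑ k ∈ Finset.univ.filter (fun k : Fin K => ¬((i : ℕ) + 1 ≤ (k : ℕ))),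
            lam k * max (t k - τ) 0 ^ (2 * m) = 0 := by
          refine Finset.sum_eq_zero fun k hk => ?_
          have hk' : (k : ℕ) ≤ (i : ℕ) := by
            have := Finset.mem_filter.mp hk
            omega
          have htk : t k ≤ τ := le_trans (ht.monotone (by simp [Fin.le_def]; omega)) hτ.1
          rw [max_eq_right (by linarith), zero_pow (by omega)]
          ring
        rw [h2, add_zero]
        refine Finset.sum_congr rfl fun k hk => ?_
        have hk' : (i : ℕ) + 1 ≤ (k : ℕ) := by
          have := Finset.mem_filter.mp hk
          exact this.2
        have htk : τ ≤ t k := le_trans hτ.2 (ht.monotone (by simp [Fin.le_def]; omega))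
        rw [max_eq_left (by linarith)]
      rw [hWτ]
      simp only [Polynomial.eval_add, Polynomial.eval_mul, Polynomial.eval_pow,
        Polynomial.eval_sub, Polynomial.eval_finset_sum, Polynomial.eval_C, Polynomial.eval_X]
  · refine part2.of_le ?_
    rw [tsub_le_iff_right]
    rw [show (2 : WithTop ℕ∞) * (m : WithTop ℕ∞) = ((2 * m : ℕ) : WithTop ℕ∞) by push_cast; ring]
    rw [show ((2 * m - 1 : ℕ) : WithTop ℕ∞) + 1 = ((2 * m - 1 + 1 : ℕ) : WithTop ℕ∞) by push_cast; ring]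
    rw [show 2 * m - 1 + 1 = 2 * m by omega]
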